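/- Let X be a Banach space and f : [0,1] → X an arbitrary function. If C is the set of points x ∈ [0,1] where the derivative f'(x) exists and equals 0, then the one-dimensional Hausdorff measure of f(C) is zero. -/

import Mathlib

open MeasureTheory
open scoped NNReal ENNReal

theorem stmt_3 {X : Type*} [NormedAddCommGroup X] [NormedSpace ℝ X] [CompleteSpace X]
    [MeasurableSpace X] [BorelSpace X]
    (f : ℝ → X) :
    μH[1] (f '' {x ∈ Set.Icc (0:ℝ) 1 | HasDerivWithinAt f 0 (Set.Icc 0 1) x}) = 0 := by
  set C := {x ∈ Set.Icc (0:ℝ) 1 | HasDerivWithinAt f 0 (Set.Icc 0 1) x} with hC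
  have key : ∀ ε : ℝ≥0, 0 < ε → μH[1] (f '' C) ≤ ε := by
    intro ε hε
    set D : ℕ → Set ℝ := fun m =>
      {x ∈ C | ∀ y ∈ Set.Icc (0:ℝ) 1, |y - x| ≤ 1/(m+1) → ‖f y - f x‖ ≤ ε * |y - x|} with hD
    have hmono : Monotone D := by
      intro a b hab x hx
      refine ⟨hx.1, fun y hy hdist => hx.2 y hy (hdist.trans ?_)⟩
      apply one_div_le_one_div_of_le (by positivity)
      have : (a:ℝ) ≤ b := Nat.cast_le.mpr hab
      linarith
    have hsub : C ⊆ ⋃ m, D m := by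
      intro x hx
      have hderiv := hx.2
      have hlo : (fun y => f y - f x) =o[nhdsWithin x (Set.Icc 0 1)] fun y => y - x := by
        have := hderiv.isLittleO
        simpa using this
      have hmem : {y | ‖f y - f x‖ ≤ (ε:ℝ) * ‖y - x‖} ∈ nhdsWithin x (Set.Icc 0 1) :=
        hlo.def (show (0:ℝ) < ε from hε)
      obtain ⟨δ, hδ, hball⟩ := Metric.mem_nhdsWithin_iff.mp hmem
      obtain ⟨m, hm⟩ := exists_nat_one_div_lt hδ
      refine Set.mem_iUnion.mpr ⟨m, hx, fun y hy hdy => ?_⟩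
      have hd : dist y x < δ := lt_of_le_of_lt (by simpa [Real.dist_eq] using hdy) hm
      have := hball ⟨Metric.mem_ball.mpr hd, hy⟩
      simpa [Real.norm_eq_abs] using this
    have hDm : ∀ m, μH[1] (f '' D m) ≤ ε := by
      intro m
      set I : ℕ → Set ℝ := fun k => Set.Icc ((k:ℝ)/(m+1)) ((k+1)/(m+1)) with hI
      have hcover : D m ⊆ ⋃ k ∈ Finset.range (m+1), I k := by
        intro x hx
        have hx01 : x ∈ Set.Icc (0:ℝ) 1 := hx.1.1
        have hx0 : (0:ℝ) ≤ x := hx01.1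
        have hx1 : x ≤ 1 := hx01.2
        by_cases hxlt : x < 1
        · have hfl : (⌊x * (m+1)⌋₊ : ℝ) ≤ x * (m+1) := Nat.floor_le (by positivity)
          have hfl2 : x * (m+1) < ⌊x * (m+1)⌋₊ + 1 := Nat.lt_floor_add_one _
          have hmem : ⌊x * (m+1)⌋₊ ∈ Finset.range (m+1) := by
            rw [Finset.mem_range]
            have : x * (m+1) < m+1 := by nlinarith
            exact Nat.floor_lt (by positivity) |>.mpr (by exact_mod_cast this)
          refine Set.mem_biUnion hmem ?_
          have hm1 : (0:ℝ) < (m:ℝ)+1 := by positivity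
          constructor
          · rw [div_le_iff₀ hm1]; linarith
          · rw [le_div_iff₀ hm1]; push_cast; linarith
        · have hx1' : x = 1 := le_antisymm hx1 (not_lt.mp hxlt)
          refine Set.mem_biUnion (Finset.self_mem_range_succ m) ?_
          have hm1 : (0:ℝ) < (m:ℝ)+1 := by positivity
          subst hx1'
          constructor
          · rw [div_le_iff₀ hm1]; linarith
          · rw [le_div_iff₀ hm1]; linarith
      have hlip : ∀ k, LipschitzOnWith ε f (D m ∩ I k) := by
        intro k
        rw [lipschitzOnWith_iff_dist_le_mul]
        intro x hx y hy
        have hxD := hx.1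
        have hyD := hy.1
        have hdiff : |y - x| ≤ 1/(m+1) := by
          have h1 := hx.2.1; have h2 := hx.2.2
          have h3 := hy.2.1; have h4 := hy.2.2
          have hkey : ((k:ℝ)+1)/(m+1) - (k:ℝ)/(m+1) = 1/(m+1) := by ring
          rw [abs_le]
          constructor <;> linarith
        have := hxD.2 y hyD.1.1 hdiff
        calc dist (f x) (f y) = ‖f y - f x‖ := by rw [dist_eq_norm, norm_sub_rev]
          _ ≤ ε * |y - x| := this
          _ = ε * dist x y := by rw [Real.dist_eq, abs_sub_comm]
      have hIk : ∀ k, μH[1] (f '' (D m ∩ I k)) ≤ ε * ENNReal.ofReal (1/(m+1)) := by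
        intro k
        calc μH[1] (f '' (D m ∩ I k)) ≤ (ε : ℝ≥0∞) ^ (1:ℝ) * μH[1] (D m ∩ I k) :=
              (hlip k).hausdorffMeasure_image_le zero_le_one
          _ ≤ (ε : ℝ≥0∞) * μH[1] (I k) := by
              rw [ENNReal.rpow_one]
              exact mul_le_mul_right (measure_mono Set.inter_subset_right) _
          _ = (ε : ℝ≥0∞) * ENNReal.ofReal (1/(m+1)) := by
              rw [MeasureTheory.hausdorffMeasure_real, Real.volume_Icc]
              congr 1
              congr 1
              field_simp
              ring
      calc μH[1] (f '' D m) ≤ μH[1] (⋃ k ∈ Finset.range (m+1), f '' (D m ∩ I k)) := by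
            apply measure_mono
            intro z hz
            obtain ⟨x, hx, rfl⟩ := hz
            obtain ⟨k, hk, hxk⟩ := Set.mem_iUnion₂.mp (hcover hx)
            exact Set.mem_biUnion hk ⟨x, ⟨hx, hxk⟩, rfl⟩
        _ ≤ ∑ k ∈ Finset.range (m+1), μH[1] (f '' (D m ∩ I k)) :=
            measure_biUnion_finset_le _ _
        _ ≤ ∑ _k ∈ Finset.range (m+1), (ε : ℝ≥0∞) * ENNReal.ofReal (1/(m+1)) :=
            Finset.sum_le_sum fun k _ => hIk k
        _ = (m+1 : ℕ) * ((ε : ℝ≥0∞) * ENNReal.ofReal (1/(m+1))) := by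
            rw [Finset.sum_const, Finset.card_range, nsmul_eq_mul]
        _ = (ε : ℝ≥0∞) * ((m+1 : ℕ) * ENNReal.ofReal (1/(m+1))) := by ring
        _ = ε := by
            have hm1 : (0:ℝ) < (m:ℝ)+1 := by positivity
            have : ((m+1 : ℕ) : ℝ≥0∞) = ENNReal.ofReal ((m:ℝ)+1) := by
              rw [ENNReal.ofReal]
              norm_cast
              push_cast
              simp [Real.toNNReal_of_nonneg hm1.le]
              rfl
            rw [this, ← ENNReal.ofReal_mul hm1.le]
            rw [mul_one_div, div_self hm1.ne', ENNReal.ofReal_one, mul_one]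
    calc μH[1] (f '' C) ≤ μH[1] (⋃ m, f '' D m) := by
          apply measure_mono
          rw [← Set.image_iUnion]
          exact Set.image_mono hsub
      _ = ⨆ m, μH[1] (f '' D m) :=
          Monotone.measure_iUnion (fun a b hab => Set.image_mono (hmono hab))
      _ ≤ ε := iSup_le hDm
  refine le_antisymm ?_ zero_le
  exact ENNReal.le_of_forall_pos_le_add fun ε hε _ => (key ε hε).trans_eq (zero_add _).symm
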